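/- Let n be a positive integer and let V_1, ..., V_m be complex n×n matrices that mutually commute (V_α V_β = V_β V_α for all α, β) and satisfy the normalization condition V_1* V_1 + ... + V_m* V_m = Id, where V* denotes the conjugate transpose. Then every V_α is normal, i.e., V_α V_α* = V_α* V_α for each α. -/

import Mathlib

open Matrix Module Submodule Finset
open scoped InnerProductSpace ComplexConjugate


set_option maxHeartbeats 1000000 in
lemma kraus_scalar_key {m N : ℕ} (d C : Fin m → Fin N → ℂ) (ν : Fin m → ℂ)
    (h1 : ∀ j, ∑ α, conj (d α j) * d α j = 1)
    (h2 : ∀ j, ∑ α, conj (d α j) * C α j = 0)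
    (h3 : ∑ α, ((∑ j, conj (C α j) * C α j) + conj (ν α) * ν α) = 1)
    (h4 : ∀ α β j, (d α j - ν α) * C β j = (d β j - ν β) * C α j) :
    ∀ α j, C α j = 0 := by
  have nsq : ∀ z : ℂ, conj z * z = ((‖z‖ ^ 2 : ℝ) : ℂ) := fun z => by
    rw [mul_comm, Complex.mul_conj']; norm_cast
  by_contra hcon
  push_neg at hcon
  obtain ⟨α₀, j₀, hC0⟩ := hcon
  -- the sum s equals 1
  set s : ℂ := ∑ α, conj (d α j₀) * ν α with hs
  have key : (1 - s) * C α₀ j₀ = 0 := by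
    have e1 : ∑ α, conj (d α j₀) * ((d α j₀ - ν α) * C α₀ j₀)
        = (1 - s) * C α₀ j₀ := by
      have : ∀ α : Fin m, conj (d α j₀) * ((d α j₀ - ν α) * C α₀ j₀)
          = conj (d α j₀) * d α j₀ * C α₀ j₀ - conj (d α j₀) * ν α * C α₀ j₀ := by
        intro α; ring
      rw [Finset.sum_congr rfl fun α _ => this α, Finset.sum_sub_distrib,
        ← Finset.sum_mul, ← Finset.sum_mul, h1, hs, sub_mul]
    have e2 : ∑ α, conj (d α j₀) * ((d α j₀ - ν α) * C α₀ j₀)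
        = (d α₀ j₀ - ν α₀) * ∑ α, conj (d α j₀) * C α j₀ := by
      rw [Finset.mul_sum]
      refine Finset.sum_congr rfl fun α _ => ?_
      rw [h4 α α₀ j₀]; ring
    rw [← e1, e2, h2, mul_zero]
  have hseq : s = 1 := by
    rcases mul_eq_zero.mp key with h | h
    · have : s = 1 := by
        have := sub_eq_zero.mp h; linear_combination -this
      exact this
    · exact absurd h hC0
  -- real versions
  have hd2 : ∑ α, ‖d α j₀‖ ^ 2 = 1 := by
    have := h1 j₀
    rw [Finset.sum_congr rfl fun α _ => nsq (d α j₀), ← Complex.ofReal_sum] at this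
    exact_mod_cast this
  have h3' : ∑ α, ((∑ j, ‖C α j‖ ^ 2) + ‖ν α‖ ^ 2) = 1 := by
    have := h3
    rw [Finset.sum_congr rfl (fun α _ => by
      rw [Finset.sum_congr rfl fun j _ => nsq (C α j), nsq (ν α), ← Complex.ofReal_sum,
        ← Complex.ofReal_add]), ← Complex.ofReal_sum] at this
    exact_mod_cast this
  -- Cauchy-Schwarz: 1 ≤ ∑ ‖ν‖²
  have hcs : (1 : ℝ) ≤ ∑ α, ‖ν α‖ ^ 2 := by
    have h1s : (1 : ℝ) ≤ ∑ α, ‖d α j₀‖ * ‖ν α‖ := by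
      have : ‖s‖ ≤ ∑ α, ‖d α j₀‖ * ‖ν α‖ := by
        refine le_trans (norm_sum_le _ _) (le_of_eq ?_)
        refine Finset.sum_congr rfl fun α _ => ?_
        rw [norm_mul, RCLike.norm_conj]
      rwa [hseq, norm_one] at this
    have h2s : (∑ α, ‖d α j₀‖ * ‖ν α‖) ^ 2 ≤ ∑ α, ‖ν α‖ ^ 2 := by
      have := Finset.sum_mul_sq_le_sq_mul_sq Finset.univ (fun α => ‖d α j₀‖)
        (fun α => ‖ν α‖)
      rwa [hd2, one_mul] at this
    calc (1:ℝ) = 1 ^ 2 := by norm_num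
      _ ≤ (∑ α, ‖d α j₀‖ * ‖ν α‖) ^ 2 := by
          apply pow_le_pow_left₀ (by norm_num) h1s 2
      _ ≤ _ := h2s
  -- but ∑ ‖ν‖² ≤ 1 - ‖C α₀ j₀‖² < 1
  have hCpos : 0 < ‖C α₀ j₀‖ ^ 2 :=
    pow_pos (norm_pos_iff.mpr hC0) 2
  rw [Finset.sum_add_distrib] at h3'
  have step1 : ‖C α₀ j₀‖ ^ 2 ≤ ∑ j, ‖C α₀ j‖ ^ 2 :=
    Finset.single_le_sum (f := fun j => ‖C α₀ j‖ ^ 2)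
      (fun j _ => sq_nonneg _) (Finset.mem_univ j₀)
  have step2 : (∑ a, ∑ j, ‖C a j‖ ^ 2) - (∑ j, ‖C α₀ j‖ ^ 2) ≥ 0 := by
    rw [ge_iff_le, sub_nonneg]
    exact Finset.single_le_sum (f := fun a => ∑ j, ‖C a j‖ ^ 2)
      (fun a _ => Finset.sum_nonneg fun j _ => sq_nonneg _) (Finset.mem_univ α₀)
  linarith


lemma exists_common_eigenvector :
    ∀ (m : ℕ) (E : Type) [AddCommGroup E] [Module ℂ E] [FiniteDimensional ℂ E]
      [Nontrivial E] (f : Fin m → Module.End ℂ E),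
      (∀ i j, f i * f j = f j * f i) →
      ∃ x : E, x ≠ 0 ∧ ∀ i, ∃ μ : ℂ, f i x = μ • x := by
  intro m
  induction m with
  | zero =>
    intro E _ _ _ _ f _
    obtain ⟨x, hx⟩ := exists_ne (0 : E)
    exact ⟨x, hx, fun i => i.elim0⟩
  | succ m ih =>
    intro E _ _ _ _ f hcomm
    obtain ⟨μ₀, hμ₀⟩ := Module.End.exists_eigenvalue (f 0)
    set W := Module.End.eigenspace (f 0) μ₀ with hW
    have hWbot : W ≠ ⊥ := hμ₀
    have : Nontrivial W := Submodule.nontrivial_iff_ne_bot.mpr hWbot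
    have hmaps : ∀ i, Set.MapsTo (f i) W W := by
      intro i y hy
      have hy' : f 0 y = μ₀ • y := Module.End.mem_eigenspace_iff.mp hy
      have : f 0 (f i y) = μ₀ • f i y := by
        have hc := congrArg (fun T : Module.End ℂ E => T y) (hcomm 0 i)
        simp only [Module.End.mul_apply] at hc
        rw [hc, hy', _root_.map_smul]
      exact Module.End.mem_eigenspace_iff.mpr this
    set g : Fin m → Module.End ℂ W := fun i => (f i.succ).restrict (hmaps i.succ) with hg
    have hgcomm : ∀ i j, g i * g j = g j * g i := by
      intro i j
      ext y
      have hc := congrArg (fun T : Module.End ℂ E => T (y : E)) (hcomm i.succ j.succ)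
      simp only [Module.End.mul_apply] at hc
      simp only [hg, Module.End.mul_apply, LinearMap.restrict_apply]
      exact hc
    obtain ⟨x, hx0, hx⟩ := ih W g hgcomm
    refine ⟨(x : E), by simpa using hx0, ?_⟩
    intro i
    refine Fin.cases ?_ ?_ i
    · exact ⟨μ₀, Module.End.mem_eigenspace_iff.mp x.2⟩
    · intro j
      obtain ⟨μ, hμ⟩ := hx j
      refine ⟨μ, ?_⟩
      have := congrArg (Subtype.val) hμ
      exact this


-- helper: adjoint acting on an eigen-orthonormal-basis
lemma adjoint_apply_of_eigen {E : Type} [NormedAddCommGroup E] [InnerProductSpace ℂ E]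
    [FiniteDimensional ℂ E] {ι : Type} [Fintype ι] [DecidableEq ι]
    (b : OrthonormalBasis ι ℂ E) (f : E →ₗ[ℂ] E) (μ : ι → ℂ)
    (h : ∀ i, f (b i) = μ i • b i) (i : ι) :
    LinearMap.adjoint f (b i) = conj (μ i) • b i := by
  have horth := orthonormal_iff_ite.mp b.orthonormal
  calc LinearMap.adjoint f (b i)
      = ∑ k, ⟪b k, LinearMap.adjoint f (b i)⟫_ℂ • b k := (b.sum_repr' _).symm
    _ = ∑ k, (if k = i then conj (μ i) else 0) • b k := by
        refine Finset.sum_congr rfl fun k _ => ?_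
        congr 1
        rw [LinearMap.adjoint_inner_right, h k, inner_smul_left, horth]
        by_cases hk : k = i <;> simp [hk]
    _ = conj (μ i) • b i := by
        rw [Finset.sum_eq_single i] <;> simp +contextual

lemma kraus_diag :
    ∀ (N : ℕ) (E : Type) [NormedAddCommGroup E] [InnerProductSpace ℂ E]
      [FiniteDimensional ℂ E], finrank ℂ E = N →
      ∀ {m : ℕ} (f : Fin m → (E →ₗ[ℂ] E)),
      (∀ α β, f α ∘ₗ f β = f β ∘ₗ f α) →
      (∑ α, (LinearMap.adjoint (f α)) ∘ₗ f α = LinearMap.id) →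
      ∃ b : OrthonormalBasis (Fin N) ℂ E, ∀ α j, ∃ μ : ℂ, f α (b j) = μ • b j := by
  intro N
  induction N with
  | zero =>
    intro E _ _ _ hdim m f _ _
    have hsub : Subsingleton E := Module.finrank_zero_iff.mp hdim
    have hob : Orthonormal ℂ (Basis.empty E : Basis (Fin 0) ℂ E) :=
      orthonormal_iff_ite.mpr (fun i => i.elim0)
    exact ⟨(Basis.empty E).toOrthonormalBasis hob, fun α j => j.elim0⟩
  | succ N ih =>
    intro E _ _ _ hdim m f hcomm hnorm
    have hpos : 0 < finrank ℂ E := by rw [hdim]; exact N.succ_pos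
    have hnt : Nontrivial E := Module.finrank_pos_iff.mp hpos
    -- the sum rule for inner products
    have hsum : ∀ u w : E, ∑ α, ⟪f α u, f α w⟫_ℂ = ⟪u, w⟫_ℂ := by
      intro u w
      have h0 : ⟪(∑ α, (LinearMap.adjoint (f α)) ∘ₗ f α) u, w⟫_ℂ = ⟪u, w⟫_ℂ := by
        rw [hnorm]; rfl
      rw [LinearMap.sum_apply, sum_inner] at h0
      rw [← h0]
      exact Finset.sum_congr rfl fun α _ => by
        rw [LinearMap.comp_apply, LinearMap.adjoint_inner_left]
    -- common eigenvector of the adjoints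
    have hadjcomm : ∀ i j, (fun β => LinearMap.adjoint (f β)) i * (fun β => LinearMap.adjoint (f β)) j
        = (fun β => LinearMap.adjoint (f β)) j * (fun β => LinearMap.adjoint (f β)) i := by
      intro i j
      simp only [Module.End.mul_eq_comp]
      rw [← LinearMap.adjoint_comp, ← LinearMap.adjoint_comp, hcomm]
    obtain ⟨x₀, hx₀ne, hx₀eig⟩ :=
      exists_common_eigenvector m E (fun β => LinearMap.adjoint (f β)) hadjcomm
    set x : E := (‖x₀‖⁻¹ : ℂ) • x₀ with hxdef
    have hxnorm : ‖x‖ = 1 := norm_smul_inv_norm hx₀ne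
    have hxne : x ≠ 0 := by
      intro h; rw [h, norm_zero] at hxnorm; norm_num at hxnorm
    have hxeig : ∀ β, ∃ μ : ℂ, LinearMap.adjoint (f β) x = μ • x := by
      intro β
      obtain ⟨μ, hμ⟩ := hx₀eig β
      exact ⟨μ, by rw [hxdef, _root_.map_smul, hμ, smul_comm]⟩
    have hxx : ⟪x, x⟫_ℂ = 1 := by
      rw [inner_self_eq_norm_sq_to_K, hxnorm]; norm_num
    -- the orthogonal complement
    set K : Submodule ℂ E := (ℂ ∙ x)ᗮ with hKdef
    have hxK : ∀ z : E, z ∈ K ↔ ⟪x, z⟫_ℂ = 0 := fun z =>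
      Submodule.mem_orthogonal_singleton_iff_inner_right
    have hKx : ∀ z ∈ K, ⟪z, x⟫_ℂ = 0 := fun z hz =>
      inner_left_of_mem_orthogonal (Submodule.mem_span_singleton_self x) hz
    have hKdim : finrank ℂ K = N := by
      have h1 : finrank ℂ (ℂ ∙ x) + finrank ℂ K = finrank ℂ E :=
        Submodule.finrank_add_finrank_orthogonal (K := (ℂ ∙ x))
      rw [finrank_span_singleton hxne, hdim] at h1
      omega
    have hmapsK : ∀ α, Set.MapsTo (f α) K K := by
      intro α z hz
      have hz2 : ⟪x, z⟫_ℂ = 0 := (hxK z).mp hz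
      show f α z ∈ (K : Set E)
      rw [SetLike.mem_coe, hxK]
      obtain ⟨μ, hμ⟩ := hxeig α
      rw [← LinearMap.adjoint_inner_left, hμ, inner_smul_left, hz2, mul_zero]
    set F : Fin m → (K →ₗ[ℂ] K) := fun α => (f α).restrict (hmapsK α) with hFdef
    have hFcoe : ∀ α (y : K), ((F α y : K) : E) = f α (y : E) := fun α y => rfl
    have hFcomm : ∀ α β, F α ∘ₗ F β = F β ∘ₗ F α := by
      intro α β
      ext y
      have := congrArg (fun T : E →ₗ[ℂ] E => T (y : E)) (hcomm α β)
      simpa only [LinearMap.comp_apply, LinearMap.coe_comp, Function.comp_apply,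
        hFcoe] using this
    have hFnorm : ∑ α, (LinearMap.adjoint (F α)) ∘ₗ F α = LinearMap.id := by
      apply LinearMap.ext; intro y
      apply ext_inner_right ℂ; intro w
      rw [LinearMap.sum_apply, sum_inner]
      have hterm : ∀ α, ⟪((LinearMap.adjoint (F α)) ∘ₗ F α) y, w⟫_ℂ
          = ⟪f α (y : E), f α (w : E)⟫_ℂ := by
        intro α
        rw [LinearMap.comp_apply, LinearMap.adjoint_inner_left, Submodule.coe_inner,
          hFcoe, hFcoe]
      rw [Finset.sum_congr rfl fun α _ => hterm α, hsum, LinearMap.id_apply,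
        Submodule.coe_inner]
    obtain ⟨v, hv⟩ := ih K hKdim F hFcomm hFnorm
    choose d hd using hv
    -- the data
    set ν : Fin m → ℂ := fun α => ⟪x, f α x⟫_ℂ with hνdef
    set c : Fin m → E := fun α => f α x - ν α • x with hcdef
    have hfx : ∀ α, f α x = c α + ν α • x := fun α => (sub_add_cancel _ _).symm
    have hcK : ∀ α, c α ∈ K := by
      intro α
      rw [hxK, hcdef]
      simp only [inner_sub_right, inner_smul_right, hxx, mul_one]
      exact sub_self _
    have hxc : ∀ α, ⟪x, c α⟫_ℂ = 0 := fun α => (hxK _).mp (hcK α)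
    have hcx : ∀ α, ⟪c α, x⟫_ℂ = 0 := fun α => hKx _ (hcK α)
    set w : Fin N → E := fun j => ((v j : K) : E) with hwdef
    have hwK : ∀ j, w j ∈ K := fun j => (v j).2
    have hxw : ∀ j, ⟪x, w j⟫_ℂ = 0 := fun j => (hxK _).mp (hwK j)
    have hwx : ∀ j, ⟪w j, x⟫_ℂ = 0 := fun j => hKx _ (hwK j)
    have hww : ∀ i j, ⟪w i, w j⟫_ℂ = if i = j then 1 else 0 := by
      intro i j
      rw [hwdef]
      rw [← Submodule.coe_inner]
      exact orthonormal_iff_ite.mp v.orthonormal i j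
    have hfw : ∀ α j, f α (w j) = d α j • w j := by
      intro α j
      rw [hwdef, ← hFcoe, hd]
      rfl
    set C : Fin m → Fin N → ℂ := fun α j => ⟪w j, c α⟫_ℂ with hCdef
    -- hypothesis (i)
    have h1 : ∀ j, ∑ α, conj (d α j) * d α j = 1 := by
      intro j
      have := hsum (w j) (w j)
      rw [hww j j] at this
      simp only [if_true] at this
      rw [← this]
      refine Finset.sum_congr rfl fun α _ => ?_
      rw [hfw, inner_smul_left, inner_smul_right, hww]
      simp
    -- hypothesis (ii)
    have h2 : ∀ j, ∑ α, conj (d α j) * C α j = 0 := by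
      intro j
      have := hsum (w j) x
      rw [hwx j] at this
      rw [← this]
      refine Finset.sum_congr rfl fun α _ => ?_
      rw [hfw, hfx, inner_smul_left, inner_add_right, inner_smul_right, hwx,
        mul_zero, add_zero, hCdef]
    -- hypothesis (iii) : uses Parseval on K
    have hParseval : ∀ α, ⟪c α, c α⟫_ℂ = ∑ j, conj (C α j) * C α j := by
      intro α
      set cK : K := ⟨c α, hcK α⟩ with hcKdef
      have hinner : ∀ j, ⟪(v j : K), cK⟫_ℂ = C α j := by
        intro j
        rw [Submodule.coe_inner]
      have hsir := v.sum_inner_mul_inner cK cK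
      have hcc : ⟪c α, c α⟫_ℂ = ⟪cK, cK⟫_ℂ := (Submodule.coe_inner K cK cK).symm
      rw [hcc, ← hsir]
      refine Finset.sum_congr rfl fun j _ => ?_
      rw [← inner_conj_symm cK (v j), hinner]
    have h3 : ∑ α, ((∑ j, conj (C α j) * C α j) + conj (ν α) * ν α) = 1 := by
      have := hsum x x
      rw [hxx] at this
      rw [← this]
      refine (Finset.sum_congr rfl fun α _ => ?_).symm
      rw [hfx]
      simp only [inner_add_left, inner_add_right, inner_smul_left, inner_smul_right]
      rw [hxc, hcx, hxx, hParseval]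
      ring
    -- hypothesis (iv) : from commutativity
    have hinner_FK : ∀ α (y : K) j, ⟪(v j : K), F α y⟫_ℂ = d α j * ⟪(v j : K), y⟫_ℂ := by
      intro α y j
      rw [← LinearMap.adjoint_inner_left,
        adjoint_apply_of_eigen v (F α) (d α) (hd α) j, inner_smul_left, Complex.conj_conj]
    have hinner_F : ∀ α (y : K) j, ⟪w j, f α (y : E)⟫_ℂ = d α j * ⟪w j, (y : E)⟫_ℂ := by
      intro α y j
      have e1 : f α (y : E) = ((F α y : K) : E) := (hFcoe α y).symm
      have e2 : ⟪(v j : K), F α y⟫_ℂ = ⟪w j, ((F α y : K) : E)⟫_ℂ :=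
        Submodule.coe_inner _ _ _
      have e3 : ⟪(v j : K), y⟫_ℂ = ⟪w j, (y : E)⟫_ℂ := Submodule.coe_inner _ _ _
      rw [e1, ← e2, hinner_FK, e3]
    have h4 : ∀ α β j, (d α j - ν α) * C β j = (d β j - ν β) * C α j := by
      intro α β j
      have hcomm' : f α (f β x) = f β (f α x) := by
        have := congrArg (fun T : E →ₗ[ℂ] E => T x) (hcomm α β)
        simpa only [LinearMap.coe_comp, Function.comp_apply] using this
      have expand : ∀ γ δ : Fin m, ⟪w j, f γ (f δ x)⟫_ℂ
          = d γ j * C δ j + ν δ * C γ j := by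
        intro γ δ
        rw [hfx δ, _root_.map_add, _root_.map_smul, inner_add_right, inner_smul_right]
        have h₁ : ⟪w j, f γ (c δ)⟫_ℂ = d γ j * C δ j := by
          have h1' := hinner_F γ ⟨c δ, hcK δ⟩ j
          exact h1'
        have h₂ : ⟪w j, f γ x⟫_ℂ = C γ j + ν γ * ⟪w j, x⟫_ℂ := by
          rw [hfx γ, inner_add_right, inner_smul_right]
        rw [h₁, h₂, hwx j]
        ring
      have := expand α β
      rw [hcomm', expand β α] at this
      linear_combination -this
    have hCzero := kraus_scalar_key d C ν h1 h2 h3 h4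
    -- hence each c α = 0 and x is a common eigenvector of f
    have hczero : ∀ α, c α = 0 := by
      intro α
      have : (⟨c α, hcK α⟩ : K) = 0 := by
        have hrepr := v.sum_repr' (⟨c α, hcK α⟩ : K)
        rw [← hrepr]
        refine Finset.sum_eq_zero fun j _ => ?_
        have : ⟪(v j : K), (⟨c α, hcK α⟩ : K)⟫_ℂ = C α j := Submodule.coe_inner _ _ _
        rw [this, hCzero α j, zero_smul]
      simpa using congrArg (Subtype.val) this
    have hfxeig : ∀ α, f α x = ν α • x := by
      intro α
      rw [hfx α, hczero α, zero_add]
    -- assemble the orthonormal basis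
    set wfull : Fin (N + 1) → E := Fin.snoc w x with hwfull
    have horth : Orthonormal ℂ wfull := by
      rw [orthonormal_iff_ite]
      intro i j
      refine Fin.lastCases ?_ (fun i' => ?_) i
      · refine Fin.lastCases ?_ (fun j' => ?_) j
        · simp only [hwfull, Fin.snoc_last, if_pos rfl]
          exact hxx
        · simp only [hwfull, Fin.snoc_last, Fin.snoc_castSucc]
          rw [hxw j', if_neg (Fin.castSucc_lt_last j').ne']
      · refine Fin.lastCases ?_ (fun j' => ?_) j
        · simp only [hwfull, Fin.snoc_last, Fin.snoc_castSucc]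
          rw [hwx i', if_neg (Fin.castSucc_lt_last i').ne]
        · simp only [hwfull, Fin.snoc_castSucc]
          rw [hww i' j']
          simp [Fin.castSucc_inj]
    have hcard : Fintype.card (Fin (N + 1)) = finrank ℂ E := by
      rw [Fintype.card_fin, hdim]
    set B := basisOfLinearIndependentOfCardEqFinrank horth.linearIndependent hcard with hBdef
    have hB : ⇑B = wfull := coe_basisOfLinearIndependentOfCardEqFinrank _ _
    have horthB : Orthonormal ℂ ⇑B := by rw [hB]; exact horth
    refine ⟨B.toOrthonormalBasis horthB, ?_⟩
    intro α j
    have hkey : ∃ μ : ℂ, f α (wfull j) = μ • wfull j := by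
      refine Fin.lastCases ?_ (fun j' => ?_) j
      · refine ⟨ν α, ?_⟩
        simp only [hwfull, Fin.snoc_last]
        exact hfxeig α
      · refine ⟨d α j', ?_⟩
        simp only [hwfull, Fin.snoc_castSucc]
        exact hfw α j'
    obtain ⟨μ, hμ⟩ := hkey
    refine ⟨μ, ?_⟩
    rw [Basis.coe_toOrthonormalBasis, hB]
    exact hμ

/-- Commuting Kraus operators on a finite-dimensional space are normal. -/
theorem commuting_kraus_normal (n m : ℕ) (hn : 0 < n)
    (V : Fin m → Matrix (Fin n) (Fin n) ℂ)
    (hcomm : ∀ α β, V α * V β = V β * V α)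
    (hnorm : ∑ α, (V α)ᴴ * V α = 1) :
    ∀ α, V α * (V α)ᴴ = (V α)ᴴ * V α := by
  intro α
  classical
  have hmul : ∀ A B : Matrix (Fin n) (Fin n) ℂ,
      Matrix.toEuclideanLin (A * B) = Matrix.toEuclideanLin A ∘ₗ Matrix.toEuclideanLin B := by
    intro A B
    rw [Matrix.toEuclideanLin_eq_toLin, Matrix.toLin_mul _ (PiLp.basisFun 2 ℂ (Fin n)) _]
  have hone : Matrix.toEuclideanLin (1 : Matrix (Fin n) (Fin n) ℂ) = LinearMap.id := by
    rw [Matrix.toEuclideanLin_eq_toLin, Matrix.toLin_one]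
  set f : Fin m → (EuclideanSpace ℂ (Fin n) →ₗ[ℂ] EuclideanSpace ℂ (Fin n)) :=
    fun β => Matrix.toEuclideanLin (V β) with hf
  have hcomm' : ∀ β γ, f β ∘ₗ f γ = f γ ∘ₗ f β := by
    intro β γ
    rw [hf]
    simp only
    rw [← hmul, ← hmul, hcomm]
  have hnorm' : ∑ β, (LinearMap.adjoint (f β)) ∘ₗ f β = LinearMap.id := by
    have hterm : ∀ β, (LinearMap.adjoint (f β)) ∘ₗ f β
        = Matrix.toEuclideanLin ((V β)ᴴ * V β) := by
      intro β
      rw [hmul, Matrix.toEuclideanLin_conjTranspose_eq_adjoint]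
    rw [Finset.sum_congr rfl fun β _ => hterm β, ← map_sum, hnorm, hone]
  have hdim : finrank ℂ (EuclideanSpace ℂ (Fin n)) = n := finrank_euclideanSpace_fin
  obtain ⟨b, hb⟩ := kraus_diag n (EuclideanSpace ℂ (Fin n)) hdim f hcomm' hnorm'
  choose μ hμ using hb
  have hadj : ∀ j, LinearMap.adjoint (f α) (b j) = conj (μ α j) • b j :=
    adjoint_apply_of_eigen b (f α) (μ α) (hμ α)
  have hcompeq : f α ∘ₗ LinearMap.adjoint (f α) = LinearMap.adjoint (f α) ∘ₗ f α := by
    apply b.toBasis.ext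
    intro j
    rw [OrthonormalBasis.coe_toBasis]
    rw [LinearMap.comp_apply, LinearMap.comp_apply, hadj, hμ, _root_.map_smul,
      _root_.map_smul, hadj, hμ, smul_smul, smul_smul, mul_comm]
  apply Matrix.toEuclideanLin.injective
  rw [hmul, hmul, Matrix.toEuclideanLin_conjTranspose_eq_adjoint]
  exact hcompeq
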